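/- Let n ≥ 1 and m ≥ 1, and let A₁, …, A_m be n × n real symmetric matrices. Then the maximum over y in the simplex S_m of (min over X in the spectraplex Δ_n of ∑_{i=1}^m y_i (A_i • X)) equals the supremum of { t ∈ ℝ : there exists y ∈ S_m with ∑_{i=1}^m y_i A_i − t·I_n positive semidefinite }, and this supremum is attained. -/

import Mathlib

open Matrix BigOperators

/-- The spectraplex: symmetric positive semidefinite `n × n` real matrices of trace one. -/
def spectraplex (n : ℕ) : Set (Matrix (Fin n) (Fin n) ℝ) :=
  {X | X.IsSymm ∧ X.PosSemidef ∧ X.trace = 1}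

/-- The unit simplex in `ℝ^m`. -/
def unitSimplex (m : ℕ) : Set (Fin m → ℝ) :=
  {y | (∑ i, y i) = 1 ∧ ∀ i, 0 ≤ y i}

section Aux

variable {n : ℕ}

lemma SDP.quad_nonneg {M : Matrix (Fin n) (Fin n) ℝ} (h : M.PosSemidef) (x : Fin n → ℝ) :
    0 ≤ x ⬝ᵥ M *ᵥ x := by simpa using h.dotProduct_mulVec_nonneg x

lemma SDP.isHermitian_of_isSymm {M : Matrix (Fin n) (Fin n) ℝ} (h : M.IsSymm) :
    M.IsHermitian := by
  rwa [Matrix.IsHermitian, Matrix.conjTranspose_eq_transpose_of_trivial]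

lemma SDP.trace_conjTranspose_mul_self_nonneg (M : Matrix (Fin n) (Fin n) ℝ) :
    0 ≤ (Mᴴ * M).trace := by
  rw [Matrix.trace]
  refine Finset.sum_nonneg fun i _ => ?_
  rw [Matrix.diag_apply, Matrix.mul_apply]
  refine Finset.sum_nonneg fun j _ => ?_
  simp [Matrix.conjTranspose_apply, mul_self_nonneg]

open scoped MatrixOrder in
lemma SDP.exists_eq_conjTranspose_mul_self {A : Matrix (Fin n) (Fin n) ℝ} (hA : A.PosSemidef) :
    ∃ B : Matrix (Fin n) (Fin n) ℝ, A = Bᴴ * B := by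
  obtain ⟨B, hB⟩ := CStarAlgebra.nonneg_iff_eq_star_mul_self.mp hA.nonneg
  exact ⟨B, hB⟩

lemma SDP.trace_mul_nonneg {A X : Matrix (Fin n) (Fin n) ℝ} (hA : A.PosSemidef)
    (hX : X.PosSemidef) : 0 ≤ (A * X).trace := by
  obtain ⟨B, rfl⟩ := SDP.exists_eq_conjTranspose_mul_self hA
  obtain ⟨C, rfl⟩ := SDP.exists_eq_conjTranspose_mul_self hX
  have h : (Bᴴ * B * (Cᴴ * C)).trace = ((B * Cᴴ)ᴴ * (B * Cᴴ)).trace := by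
    rw [Matrix.conjTranspose_mul, Matrix.conjTranspose_conjTranspose,
      Matrix.mul_assoc Bᴴ, Matrix.trace_mul_comm Bᴴ, Matrix.trace_mul_comm (C * Bᴴ)]
    simp only [Matrix.mul_assoc]
  rw [h]
  exact SDP.trace_conjTranspose_mul_self_nonneg _

lemma SDP.quad_pair_nonneg {X : Matrix (Fin n) (Fin n) ℝ} (hX : X.PosSemidef) (i j : Fin n)
    (c : ℝ) : 0 ≤ X i i + c * X i j + c * X j i + c * c * X j j := by
  have h := SDP.quad_nonneg hX
    ((Pi.single i 1 : Fin n → ℝ) + c • (Pi.single j 1 : Fin n → ℝ))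
  rw [Matrix.mulVec_add, Matrix.mulVec_smul, add_dotProduct,
    smul_dotProduct, dotProduct_add, dotProduct_add,
    dotProduct_smul, dotProduct_smul] at h
  simp only [Matrix.mulVec_single, single_dotProduct, smul_eq_mul, MulOpposite.op_one,
    one_smul, Matrix.col_apply] at h
  calc (0:ℝ) ≤ _ := h
    _ = X i i + c * X i j + c * X j i + c * c * X j j := by ring

lemma SDP.spectraplex_diag_nonneg {X : Matrix (Fin n) (Fin n) ℝ} (hX : X ∈ spectraplex n)
    (i : Fin n) : 0 ≤ X i i := by
  have h := SDP.quad_pair_nonneg hX.2.1 i i 0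
  linarith

lemma SDP.spectraplex_diag_le_one {X : Matrix (Fin n) (Fin n) ℝ} (hX : X ∈ spectraplex n)
    (i : Fin n) : X i i ≤ 1 := by
  have h := hX.2.2
  rw [Matrix.trace] at h
  rw [← h]
  exact Finset.single_le_sum (fun j _ => SDP.spectraplex_diag_nonneg hX j) (Finset.mem_univ i)

lemma SDP.spectraplex_entry_abs_le {X : Matrix (Fin n) (Fin n) ℝ} (hX : X ∈ spectraplex n)
    (i j : Fin n) : |X i j| ≤ 1 := by
  have hsym : X j i = X i j := by
    have := congrFun (congrFun hX.1 i) j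
    simpa [Matrix.transpose_apply] using this
  have h1 := SDP.quad_pair_nonneg hX.2.1 i j 1
  have h2 := SDP.quad_pair_nonneg hX.2.1 i j (-1)
  have di := SDP.spectraplex_diag_le_one hX i
  have dj := SDP.spectraplex_diag_le_one hX j
  rw [abs_le]
  constructor <;> nlinarith

lemma SDP.spectraplex_isClosed : IsClosed (spectraplex n) := by
  have h1 : IsClosed {X : Matrix (Fin n) (Fin n) ℝ | X.IsSymm} :=
    isClosed_eq continuous_id.matrix_transpose continuous_id
  have h2 : IsClosed {X : Matrix (Fin n) (Fin n) ℝ | X.PosSemidef} := by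
    have he : {X : Matrix (Fin n) (Fin n) ℝ | X.PosSemidef} =
        {X : Matrix (Fin n) (Fin n) ℝ | Xᴴ = X} ∩
          ⋂ x : Fin n → ℝ, {X : Matrix (Fin n) (Fin n) ℝ | 0 ≤ x ⬝ᵥ X *ᵥ x} := by
      ext X
      constructor
      · intro h
        exact ⟨h.1, Set.mem_iInter.2 fun x => SDP.quad_nonneg h x⟩
      · rintro ⟨hh, hq⟩
        refine Matrix.PosSemidef.of_dotProduct_mulVec_nonneg hh fun x => ?_
        simpa using Set.mem_iInter.1 hq x
    rw [he]
    refine IsClosed.inter (isClosed_eq continuous_id.matrix_conjTranspose continuous_id)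
      (isClosed_iInter fun x => isClosed_le continuous_const ?_)
    exact continuous_const.dotProduct (continuous_id.matrix_mulVec continuous_const)
  have h3 : IsClosed {X : Matrix (Fin n) (Fin n) ℝ | X.trace = 1} :=
    isClosed_eq continuous_id.matrix_trace continuous_const
  have he2 : spectraplex n = {X : Matrix (Fin n) (Fin n) ℝ | X.IsSymm} ∩
      ({X : Matrix (Fin n) (Fin n) ℝ | X.PosSemidef} ∩
        {X : Matrix (Fin n) (Fin n) ℝ | X.trace = 1}) := rfl
  rw [he2]
  exact h1.inter (h2.inter h3)

lemma SDP.spectraplex_isCompact : IsCompact (spectraplex n) := by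
  have h1 : IsCompact ((Set.univ.pi fun _ : Fin n =>
      Set.univ.pi fun _ : Fin n => Set.Icc (-1:ℝ) 1) : Set (Matrix (Fin n) (Fin n) ℝ)) :=
    isCompact_univ_pi fun _ => isCompact_univ_pi fun _ => isCompact_Icc
  refine h1.of_isClosed_subset SDP.spectraplex_isClosed ?_
  intro X hX i _ j _
  rw [Set.mem_Icc, ← abs_le]
  exact SDP.spectraplex_entry_abs_le hX i j

lemma SDP.spectraplex_nonempty (hn : 1 ≤ n) : (spectraplex n).Nonempty := by
  have hn' : (n:ℝ) ≠ 0 := Nat.cast_ne_zero.mpr (by omega)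
  have hsymm : ((n:ℝ)⁻¹ • 1 : Matrix (Fin n) (Fin n) ℝ).IsSymm := by
    simp [Matrix.IsSymm, Matrix.transpose_smul]
  refine ⟨(n:ℝ)⁻¹ • 1, hsymm, Matrix.PosSemidef.of_dotProduct_mulVec_nonneg (SDP.isHermitian_of_isSymm hsymm) fun x => ?_, ?_⟩
  · rw [Matrix.smul_mulVec, Matrix.one_mulVec, dotProduct_smul]
    simp only [star_trivial, smul_eq_mul]
    have : 0 ≤ x ⬝ᵥ x := Finset.sum_nonneg fun i _ => mul_self_nonneg (x i)
    positivity
  · rw [Matrix.trace_smul, Matrix.trace_one, Fintype.card_fin]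
    simp only [smul_eq_mul]
    field_simp

lemma SDP.trace_mul_vecMulVec (M : Matrix (Fin n) (Fin n) ℝ) (x : Fin n → ℝ) :
    (M * Matrix.vecMulVec x x).trace = x ⬝ᵥ M *ᵥ x := by
  rw [Matrix.trace]
  simp only [Matrix.diag_apply, Matrix.mul_apply, Matrix.vecMulVec_apply,
    dotProduct, Matrix.mulVec]
  refine Finset.sum_congr rfl fun i _ => ?_
  rw [Finset.mul_sum]
  refine Finset.sum_congr rfl fun j _ => ?_
  ring

lemma SDP.dot_vecMulVec (x z : Fin n → ℝ) :
    z ⬝ᵥ (Matrix.vecMulVec x x) *ᵥ z = (x ⬝ᵥ z) * (x ⬝ᵥ z) := by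
  simp only [dotProduct, Matrix.mulVec, Matrix.vecMulVec_apply]
  rw [Finset.sum_mul]
  refine Finset.sum_congr rfl fun i _ => ?_
  rw [Finset.mul_sum, Finset.mul_sum]
  exact Finset.sum_congr rfl fun j _ => by ring

lemma SDP.trace_vecMulVec (x : Fin n → ℝ) :
    (Matrix.vecMulVec x x).trace = x ⬝ᵥ x := by
  rw [Matrix.trace]
  simp only [Matrix.diag_apply, Matrix.vecMulVec_apply, dotProduct]

lemma SDP.trace_sum_smul_mul {m : ℕ} (y : Fin m → ℝ) (A : Fin m → Matrix (Fin n) (Fin n) ℝ)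
    (X : Matrix (Fin n) (Fin n) ℝ) :
    ((∑ i, y i • A i) * X).trace = ∑ i, y i * (A i * X).trace := by
  rw [Matrix.sum_mul, Matrix.trace_sum]
  refine Finset.sum_congr rfl fun i _ => ?_
  rw [Matrix.smul_mul, Matrix.trace_smul, smul_eq_mul]

end Aux

/-- The maximum over `y` in the simplex of the (attained) minimum over the spectraplex of
`∑ yᵢ (Aᵢ • X)` equals the supremum of `{t | ∃ y ∈ Sₘ, ∑ yᵢ Aᵢ - t Iₙ ⪰ 0}`,
and this supremum is attained. -/
theorem maximin_eq_sup_shift_posSemidef {n m : ℕ} (hn : 1 ≤ n) (hm : 1 ≤ m)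
    (A : Fin m → Matrix (Fin n) (Fin n) ℝ) (hA : ∀ i, (A i).IsSymm) :
    ∃ v : ℝ,
      IsGreatest {r : ℝ | ∃ y ∈ unitSimplex m,
        IsLeast {s : ℝ | ∃ X ∈ spectraplex n, s = ∑ i, y i * (A i * X).trace} r} v ∧
      IsGreatest {t : ℝ | ∃ y ∈ unitSimplex m,
        ((∑ i, y i • A i) - t • (1 : Matrix (Fin n) (Fin n) ℝ)).PosSemidef} v := by
  classical
  set g : (Fin m → ℝ) → Matrix (Fin n) (Fin n) ℝ → ℝ :=
    fun y X => ∑ i, y i * (A i * X).trace with hg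
  have hgcont : ∀ y, Continuous (g y) := fun y =>
    continuous_finset_sum _ fun i _ =>
      continuous_const.mul ((continuous_const.matrix_mul continuous_id).matrix_trace)
  have hScomp := SDP.spectraplex_isCompact (n := n)
  have hSne := SDP.spectraplex_nonempty hn
  set T : (Fin m → ℝ) → Set ℝ := fun y => g y '' spectraplex n with hT
  have hTcomp : ∀ y, IsCompact (T y) := fun y => hScomp.image (hgcont y)
  have hTne : ∀ y, (T y).Nonempty := fun y => hSne.image _
  set f : (Fin m → ℝ) → ℝ := fun y => sInf (T y) with hf
  have hfmem : ∀ y, f y ∈ T y := fun y => (hTcomp y).sInf_mem (hTne y)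
  have hfle : ∀ y X, X ∈ spectraplex n → f y ≤ g y X := fun y X hX =>
    csInf_le (hTcomp y).bddBelow ⟨X, hX, rfl⟩
  have hfleast : ∀ y, IsLeast {s : ℝ | ∃ X ∈ spectraplex n,
      s = ∑ i, y i * (A i * X).trace} (f y) := by
    intro y
    constructor
    · obtain ⟨X, hX, hXeq⟩ := hfmem y
      exact ⟨X, hX, hXeq.symm⟩
    · rintro s ⟨X, hX, rfl⟩
      exact hfle y X hX
  -- a uniform bound
  set K : ℝ := ∑ i, ∑ j, ∑ k, |A i j k| with hK
  have hKnn : 0 ≤ K := by positivity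
  have hbound : ∀ i X, X ∈ spectraplex n → |(A i * X).trace| ≤ K := by
    intro i X hX
    have h1 : |(A i * X).trace| ≤ ∑ j, ∑ k, |A i j k| := by
      rw [Matrix.trace]
      calc |∑ j, (A i * X).diag j| ≤ ∑ j, |(A i * X).diag j| :=
            Finset.abs_sum_le_sum_abs _ _
        _ ≤ ∑ j, ∑ k, |A i j k| := by
            refine Finset.sum_le_sum fun j _ => ?_
            rw [Matrix.diag_apply, Matrix.mul_apply]
            calc |∑ k, A i j k * X k j| ≤ ∑ k, |A i j k * X k j| :=
                  Finset.abs_sum_le_sum_abs _ _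
              _ ≤ ∑ k, |A i j k| := by
                  refine Finset.sum_le_sum fun k _ => ?_
                  rw [abs_mul]
                  calc |A i j k| * |X k j| ≤ |A i j k| * 1 :=
                        mul_le_mul_of_nonneg_left (SDP.spectraplex_entry_abs_le hX k j)
                          (abs_nonneg _)
                    _ = |A i j k| := mul_one _
    refine h1.trans ?_
    exact Finset.single_le_sum (f := fun i => ∑ j, ∑ k, |A i j k|)
      (fun i _ => by positivity) (Finset.mem_univ i)
  -- f is continuous
  have hkey : ∀ y z : Fin m → ℝ, f y ≤ f z + (∑ i, |y i - z i|) * K := by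
    intro y z
    obtain ⟨X, hX, hXeq⟩ := hfmem z
    calc f y ≤ g y X := hfle y X hX
      _ = g z X + ∑ i, (y i - z i) * (A i * X).trace := by
          rw [hg]; simp only []; rw [← Finset.sum_add_distrib]
          refine Finset.sum_congr rfl fun i _ => by ring
      _ ≤ g z X + (∑ i, |y i - z i|) * K := by
          refine add_le_add_right ?_ _
          calc ∑ i, (y i - z i) * (A i * X).trace
              ≤ ∑ i, |y i - z i| * K := by
                refine Finset.sum_le_sum fun i _ => ?_
                calc (y i - z i) * (A i * X).trace ≤ |(y i - z i) * (A i * X).trace| :=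
                      le_abs_self _
                  _ = |y i - z i| * |(A i * X).trace| := abs_mul _ _
                  _ ≤ |y i - z i| * K :=
                      mul_le_mul_of_nonneg_left (hbound i X hX) (abs_nonneg _)
            _ = (∑ i, |y i - z i|) * K := by rw [Finset.sum_mul]
      _ = f z + (∑ i, |y i - z i|) * K := by rw [hXeq]
  have hfc : Continuous f := by
    rw [Metric.continuous_iff]
    intro y ε hε
    refine ⟨ε / (m * K + 1), by positivity, fun z hz => ?_⟩
    have habs : |f z - f y| ≤ (∑ i, |z i - y i|) * K := by
      rw [abs_sub_le_iff]
      constructor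
      · have := hkey z y
        linarith
      · have := hkey y z
        have hsum : ∑ i, |y i - z i| = ∑ i, |z i - y i| :=
          Finset.sum_congr rfl fun i _ => abs_sub_comm _ _
        rw [hsum] at this
        linarith
    have hsb : ∑ i, |z i - y i| ≤ m * dist z y := by
      calc ∑ i, |z i - y i| ≤ ∑ _i : Fin m, dist z y := by
            refine Finset.sum_le_sum fun i _ => ?_
            rw [← Real.dist_eq]
            exact dist_le_pi_dist z y i
        _ = m * dist z y := by
            rw [Finset.sum_const, Finset.card_univ, Fintype.card_fin, nsmul_eq_mul]
    have hd0 : 0 ≤ dist z y := dist_nonneg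
    have hz' : dist z y * (m * K + 1) < ε :=
      (lt_div_iff₀ (by positivity)).mp hz
    rw [Real.dist_eq]
    calc |f z - f y| ≤ (∑ i, |z i - y i|) * K := habs
      _ ≤ m * dist z y * K := mul_le_mul_of_nonneg_right hsb hKnn
      _ < ε := by nlinarith
  -- the simplex is compact and nonempty
  have hUcomp : IsCompact (unitSimplex m) := by
    have : unitSimplex m = stdSimplex ℝ (Fin m) := by
      ext y
      constructor
      · intro hy; exact ⟨hy.2, hy.1⟩
      · intro hy; exact ⟨hy.2, hy.1⟩
    rw [this]
    exact isCompact_stdSimplex _ _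
  have hUne : (unitSimplex m).Nonempty := by
    have hm' : (m:ℝ) ≠ 0 := Nat.cast_ne_zero.mpr (by omega)
    refine ⟨fun _ => (m:ℝ)⁻¹, ?_, fun i => by positivity⟩
    rw [Finset.sum_const, Finset.card_univ, Fintype.card_fin, nsmul_eq_mul]
    field_simp
  obtain ⟨y0, hy0U, hy0max⟩ := hUcomp.exists_isMaxOn hUne hfc.continuousOn
  refine ⟨f y0, ⟨⟨y0, hy0U, hfleast y0⟩, ?_⟩, ⟨⟨y0, hy0U, ?_⟩, ?_⟩⟩
  · -- upper bound for set 1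
    rintro r ⟨y, hy, hr⟩
    have hreq : r = f y :=
      le_antisymm (hr.2 (hfleast y).1) ((hfleast y).2 hr.1)
    rw [hreq]
    exact hy0max hy
  · -- membership in set 2
    set B : Matrix (Fin n) (Fin n) ℝ := ∑ i, y0 i • A i with hB
    have hBsymm : Bᵀ = B := by
      rw [hB, Matrix.transpose_sum]
      exact Finset.sum_congr rfl fun i _ => by rw [Matrix.transpose_smul, (hA i).eq]
    refine Matrix.PosSemidef.of_dotProduct_mulVec_nonneg (SDP.isHermitian_of_isSymm ?_) fun x => ?_
    · show (B - f y0 • 1)ᵀ = B - f y0 • 1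
      rw [Matrix.transpose_sub, Matrix.transpose_smul, Matrix.transpose_one, hBsymm]
    · simp only [star_trivial]
      rw [Matrix.sub_mulVec, dotProduct_sub, Matrix.smul_mulVec,
        Matrix.one_mulVec, dotProduct_smul, smul_eq_mul, sub_nonneg]
      have hc0 : 0 ≤ x ⬝ᵥ x := Finset.sum_nonneg fun i _ => mul_self_nonneg (x i)
      rcases eq_or_lt_of_le hc0 with hc | hc
      · -- x = 0
        have hx : x = 0 := by
          funext i
          have := (Finset.sum_eq_zero_iff_of_nonneg
            (fun j _ => mul_self_nonneg (x j))).mp hc.symm i (Finset.mem_univ i)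
          exact mul_self_eq_zero.mp this
        rw [hx]
        simp
      · -- x ≠ 0; use the rank one matrix
        set c : ℝ := x ⬝ᵥ x with hcdef
        set X0 : Matrix (Fin n) (Fin n) ℝ := c⁻¹ • Matrix.vecMulVec x x with hX0
        have hX0symm : X0.IsSymm := by
          show X0ᵀ = X0
          rw [hX0, Matrix.transpose_smul]
          congr 1
          ext i j
          simp [Matrix.vecMulVec_apply, mul_comm]
        have hX0mem : X0 ∈ spectraplex n := by
          refine ⟨hX0symm, Matrix.PosSemidef.of_dotProduct_mulVec_nonneg (SDP.isHermitian_of_isSymm hX0symm) fun z => ?_, ?_⟩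
          · simp only [star_trivial]
            rw [hX0, Matrix.smul_mulVec, dotProduct_smul,
              SDP.dot_vecMulVec, smul_eq_mul]
            have h1 : 0 ≤ (x ⬝ᵥ z) * (x ⬝ᵥ z) := mul_self_nonneg _
            have h2 : 0 ≤ c⁻¹ := inv_nonneg.mpr hc.le
            positivity
          · rw [hX0, Matrix.trace_smul, SDP.trace_vecMulVec, ← hcdef, smul_eq_mul,
              inv_mul_cancel₀ (ne_of_gt hc)]
        have hle := hfle y0 X0 hX0mem
        have hBx : x ⬝ᵥ B *ᵥ x = ∑ i, y0 i * (x ⬝ᵥ (A i) *ᵥ x) := by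
          rw [← SDP.trace_mul_vecMulVec, hB, SDP.trace_sum_smul_mul]
          exact Finset.sum_congr rfl fun i _ => by rw [SDP.trace_mul_vecMulVec]
        have hgeq : g y0 X0 = c⁻¹ * (x ⬝ᵥ B *ᵥ x) := by
          rw [hg, hBx, Finset.mul_sum]
          refine Finset.sum_congr rfl fun i _ => ?_
          rw [hX0, Matrix.mul_smul, Matrix.trace_smul, SDP.trace_mul_vecMulVec,
            smul_eq_mul]
          ring
        have : f y0 ≤ c⁻¹ * (x ⬝ᵥ B *ᵥ x) := by rw [← hgeq]; exact hle
        have hfinal := mul_le_mul_of_nonneg_right this hc.le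
        rw [mul_comm c⁻¹, mul_assoc, inv_mul_cancel₀ (ne_of_gt hc), mul_one] at hfinal
        exact hfinal
  · -- upper bound for set 2
    rintro t ⟨y, hy, hpsd⟩
    obtain ⟨X0, hX0, hX0eq⟩ := hfmem y
    have h0 : 0 ≤ (((∑ i, y i • A i) - t • (1 : Matrix (Fin n) (Fin n) ℝ)) * X0).trace :=
      SDP.trace_mul_nonneg hpsd hX0.2.1
    rw [Matrix.sub_mul, Matrix.trace_sub, Matrix.smul_mul, Matrix.one_mul,
      Matrix.trace_smul, hX0.2.2, smul_eq_mul, mul_one, sub_nonneg,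
      SDP.trace_sum_smul_mul] at h0
    calc t ≤ ∑ i, y i * (A i * X0).trace := h0
      _ = f y := hX0eq
      _ ≤ f y0 := hy0max hy
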